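/- arXiv:1404.6819 — 2 statements merged into one kernel-verified Lean document; each statement's English description precedes it below -/
import Mathlib

section
/- Suppose {A_1,…,A_k} is an irreducible family of pairwise commuting matrices in M_S([0,∞)) for a finite set S, and let x be the unique non-negative common eigenvector of the A_i with Σ_{s∈S} x_s = 1. If z ∈ ℂ^S satisfies A_i z = ρ(A_i) z for all 1 ≤ i ≤ k (regarding A_i as a complex matrix), then z ∈ ℂ x, i.e. z is a complex scalar multiple of x. -/
noncomputable def specRad {S : Type*} [Fintype S] [DecidableEq S] (B : Matrix S S ℝ) : ℝ :=
  (spectralRadius ℂ (B.map Complex.ofReal)).toReal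

def matPow {S : Type*} [Fintype S] [DecidableEq S] {k : ℕ}
    (A : Fin k → Matrix S S ℝ) (n : Fin k → ℕ) : Matrix S S ℝ :=
  ((List.finRange k).map fun i => A i ^ n i).prod

def IsIrreducibleFamily {S : Type*} [Fintype S] [DecidableEq S] {k : ℕ}
    (A : Fin k → Matrix S S ℝ) : Prop :=
  (∀ i, A i ≠ 0) ∧
    ∃ F : Finset (Fin k → ℕ), ∀ v w : S, 0 < (∑ n ∈ F, matPow A n) v w

section PFAux
open Matrix

lemma eig_bound {S : Type*} [Fintype S] [DecidableEq S]
    (M : Matrix S S ℝ) (hM : ∀ v w, 0 ≤ M v w)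
    (x : S → ℝ) (hx : ∀ s, 0 < x s) (lam : ℝ) (hMx : M.mulVec x = lam • x)
    (β : ℂ) (u : S → ℂ) (hu : u ≠ 0)
    (hMu : (M.map Complex.ofReal).mulVec u = β • u) : ‖β‖ ≤ lam := by
  have hne : (Finset.univ : Finset S).Nonempty := by
    rcases Function.ne_iff.mp hu with ⟨s, hs⟩
    exact ⟨s, Finset.mem_univ s⟩
  obtain ⟨s0, -, hs0⟩ := Finset.exists_max_image Finset.univ (fun s => ‖u s‖ / x s) hne
  set c := ‖u s0‖ / x s0 with hc
  have hle : ∀ t, ‖u t‖ ≤ c * x t := by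
    intro t
    have := hs0 t (Finset.mem_univ t)
    calc ‖u t‖ = ‖u t‖ / x t * x t := by rw [div_mul_cancel₀ _ (hx t).ne']
    _ ≤ c * x t := by exact mul_le_mul_of_nonneg_right this (hx t).le
  have hcpos : 0 < c := by
    rcases Function.ne_iff.mp hu with ⟨s, hs⟩
    have h1 : 0 < ‖u s‖ / x s := div_pos (norm_pos_iff.mpr hs) (hx s)
    exact lt_of_lt_of_le h1 (hs0 s (Finset.mem_univ s))
  have hus0 : ‖u s0‖ = c * x s0 := by rw [hc, div_mul_cancel₀ _ (hx s0).ne']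
  have key : ‖β‖ * (c * x s0) ≤ lam * (c * x s0) := by
    have h1 : β * u s0 = ∑ t, (M s0 t : ℂ) * u t := by
      have := congrFun hMu s0
      simp [Matrix.mulVec, dotProduct, Pi.smul_apply, smul_eq_mul] at this
      rw [← this]
    calc ‖β‖ * (c * x s0) = ‖β * u s0‖ := by rw [norm_mul, hus0]
    _ = ‖∑ t, (M s0 t : ℂ) * u t‖ := by rw [h1]
    _ ≤ ∑ t, ‖(M s0 t : ℂ) * u t‖ := norm_sum_le _ _
    _ = ∑ t, M s0 t * ‖u t‖ := by
        refine Finset.sum_congr rfl fun t _ => ?_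
        rw [norm_mul, Complex.norm_real, Real.norm_of_nonneg (hM s0 t)]
    _ ≤ ∑ t, M s0 t * (c * x t) := by
        refine Finset.sum_le_sum fun t _ => mul_le_mul_of_nonneg_left (hle t) (hM s0 t)
    _ = c * ∑ t, M s0 t * x t := by rw [Finset.mul_sum]; exact Finset.sum_congr rfl fun t _ => by ring
    _ = c * (lam * x s0) := by
        have := congrFun hMx s0
        simp [Matrix.mulVec, dotProduct, Pi.smul_apply, smul_eq_mul] at this
        rw [this]
    _ = lam * (c * x s0) := by ring
  exact le_of_mul_le_mul_right key (mul_pos hcpos (hx s0))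

lemma spec_mulVec {S : Type*} [Fintype S] [DecidableEq S] (N : Matrix S S ℂ) (β : ℂ)
    (h : β ∈ spectrum ℂ N) : ∃ u : S → ℂ, u ≠ 0 ∧ N.mulVec u = β • u := by
  rw [spectrum.mem_iff, Matrix.isUnit_iff_isUnit_det, isUnit_iff_ne_zero, not_ne_iff] at h
  obtain ⟨u, hu, h0⟩ := (Matrix.exists_mulVec_eq_zero_iff).mpr h
  refine ⟨u, hu, ?_⟩
  have : (algebraMap ℂ (Matrix S S ℂ)) β = β • (1 : Matrix S S ℂ) := by
    simp [Algebra.algebraMap_eq_smul_one]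
  rw [this, Matrix.sub_mulVec, Matrix.smul_mulVec, Matrix.one_mulVec, sub_eq_zero] at h0
  exact h0.symm

lemma mem_spec_of_eig {S : Type*} [Fintype S] [DecidableEq S] (N : Matrix S S ℂ) (β : ℂ)
    (u : S → ℂ) (hu : u ≠ 0) (h : N.mulVec u = β • u) : β ∈ spectrum ℂ N := by
  rw [spectrum.mem_iff, Matrix.isUnit_iff_isUnit_det, isUnit_iff_ne_zero, not_ne_iff]
  rw [← Matrix.exists_mulVec_eq_zero_iff]
  refine ⟨u, hu, ?_⟩
  have : (algebraMap ℂ (Matrix S S ℂ)) β = β • (1 : Matrix S S ℂ) := by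
    simp [Algebra.algebraMap_eq_smul_one]
  rw [this, Matrix.sub_mulVec, Matrix.smul_mulVec, Matrix.one_mulVec, h, sub_self]

lemma mulVec_complexify {S : Type*} [Fintype S] [DecidableEq S] (M : Matrix S S ℝ)
    (x : S → ℝ) (lam : ℝ) (h : M.mulVec x = lam • x) :
    (M.map Complex.ofReal).mulVec (fun s => (x s : ℂ)) = (lam : ℂ) • (fun s => (x s : ℂ)) := by
  funext s
  have := congrFun h s
  simp only [Matrix.mulVec, dotProduct, Pi.smul_apply, smul_eq_mul] at this ⊢
  simp only [Matrix.map_apply]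
  push_cast
  exact_mod_cast congrArg (Complex.ofReal) this

lemma specRad_eq {S : Type*} [Fintype S] [DecidableEq S] [Nonempty S]
    (M : Matrix S S ℝ) (hM : ∀ v w, 0 ≤ M v w)
    (x : S → ℝ) (hx : ∀ s, 0 < x s) (lam : ℝ) (hMx : M.mulVec x = lam • x) :
    specRad M = lam := by
  have hlam : 0 ≤ lam := by
    obtain ⟨s⟩ := ‹Nonempty S›
    have h1 := congrFun hMx s
    simp only [Matrix.mulVec, dotProduct, Pi.smul_apply, smul_eq_mul] at h1
    have h2 : 0 ≤ lam * x s := h1 ▸ Finset.sum_nonneg fun t _ => mul_nonneg (hM s t) (hx t).le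
    rw [mul_comm] at h2; exact nonneg_of_mul_nonneg_right h2 (hx s)
  have hxc : (fun s => (x s : ℂ)) ≠ 0 := by
    obtain ⟨s⟩ := ‹Nonempty S›
    intro h
    have := congrFun h s
    simp at this
    exact (hx s).ne' this
  have hmem : (lam : ℂ) ∈ spectrum ℂ (M.map Complex.ofReal) :=
    mem_spec_of_eig _ _ _ hxc (mulVec_complexify M x lam hMx)
  have hrad : spectralRadius ℂ (M.map Complex.ofReal) = (lam.toNNReal : ENNReal) := by
    apply le_antisymm
    · rw [spectralRadius]
      refine iSup₂_le fun β hβ => ?_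
      obtain ⟨u, hu, hMu⟩ := spec_mulVec _ β hβ
      have := eig_bound M hM x hx lam hMx β u hu hMu
      rw [ENNReal.coe_le_coe, ← NNReal.coe_le_coe]
      simpa [Real.coe_toNNReal lam hlam] using this
    · have : (↑‖(lam : ℂ)‖₊ : ENNReal) ≤ spectralRadius ℂ (M.map Complex.ofReal) := by
        rw [spectralRadius]
        exact le_iSup₂ (f := fun k (_ : k ∈ spectrum ℂ (M.map Complex.ofReal)) => (‖k‖₊ : ENNReal)) _ hmem
      calc (lam.toNNReal : ENNReal) = (‖(lam : ℂ)‖₊ : ENNReal) := by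
            rw [ENNReal.coe_inj]
            apply NNReal.coe_injective
            simp [Real.coe_toNNReal lam hlam, Complex.norm_of_nonneg hlam, abs_of_nonneg hlam]
      _ ≤ _ := this
  rw [specRad, hrad]
  simp [Real.coe_toNNReal lam hlam]

lemma listprod_mulVec {S : Type*} [Fintype S] [DecidableEq S] {k : ℕ} {R : Type*} [CommRing R]
    (C : Fin k → Matrix S S R) (r : Fin k → R) (z : S → R)
    (h : ∀ i, (C i).mulVec z = r i • z) (n : Fin k → ℕ) :
    ∀ L : List (Fin k),
      ((L.map fun i => C i ^ n i).prod).mulVec z = ((L.map fun i => r i ^ n i).prod) • z := by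
  have hpow : ∀ i m, (C i ^ m).mulVec z = (r i ^ m) • z := by
    intro i m
    induction m with
    | zero => simp
    | succ m ih =>
      rw [pow_succ, ← Matrix.mulVec_mulVec, h i, Matrix.mulVec_smul, ih, pow_succ,
        smul_smul, mul_comm]
  intro L
  induction L with
  | nil => simp
  | cons a L ih =>
    simp only [List.map_cons, List.prod_cons]
    rw [← Matrix.mulVec_mulVec, ih, Matrix.mulVec_smul, hpow, smul_smul, mul_comm]

lemma re_eq_abs_imp {w : ℂ} (h : w.re = ‖w‖) : w = (w.re : ℂ) := by
  have h2 : w.re ^ 2 = Complex.normSq w := by rw [h, Complex.sq_norm]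
  have h3 : w.im ^ 2 = 0 := by
    have := Complex.normSq_apply w
    nlinarith [this]
  apply Complex.ext
  · simp
  · simpa [pow_eq_zero_iff] using h3

lemma sum_mulVec' {S ι : Type*} [Fintype S] {R : Type*} [CommRing R]
    (F : Finset ι) (M : ι → Matrix S S R) (v : S → R) :
    (∑ n ∈ F, M n).mulVec v = ∑ n ∈ F, (M n).mulVec v := by
  funext s
  simp only [Matrix.mulVec, dotProduct, Finset.sum_apply, Matrix.sum_apply,
    Finset.sum_mul]
  rw [Finset.sum_comm]

lemma ofReal_list_prod (l : List ℝ) :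
    ((l.prod : ℝ) : ℂ) = (l.map Complex.ofReal).prod := by
  induction l with
  | nil => simp
  | cons a l ih => simp only [List.map_cons, List.prod_cons, ← ih]; push_cast; ring

/-- Any complex vector `z` with `A_i z = ρ(A_i) z` for all `i` is a complex scalar multiple
of the unimodular Perron–Frobenius eigenvector `x`. -/
theorem common_eigenspace_one_dimensional {S : Type*} [Fintype S] [DecidableEq S] {k : ℕ}
    (A : Fin k → Matrix S S ℝ)
    (hnn : ∀ i v w, 0 ≤ A i v w)
    (hcomm : ∀ i j, A i * A j = A j * A i)
    (hirr : IsIrreducibleFamily A)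
    (x : S → ℝ)
    (hx : (∀ s, 0 ≤ x s) ∧ (∑ s, x s = 1) ∧
      ∀ i, ∃ lam : ℝ, (A i).mulVec x = lam • x)
    (z : S → ℂ)
    (hz : ∀ i, ((A i).map Complex.ofReal).mulVec z = (specRad (A i) : ℂ) • z) :
    ∃ c : ℂ, z = c • fun s => (x s : ℂ) := by
  obtain ⟨hxnn, hxsum, hlam'⟩ := hx
  choose lam hlam using hlam'
  obtain ⟨-, F, hF⟩ := hirr
  -- S is nonempty
  have hSne : Nonempty S := by
    rcases isEmpty_or_nonempty S with h | h
    · exfalso; rw [Finset.sum_of_isEmpty] at hxsum; exact one_ne_zero hxsum.symm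
    · exact h
  -- some coordinate of x is positive
  obtain ⟨s1, hs1⟩ : ∃ s, 0 < x s := by
    by_contra h
    push_neg at h
    have : ∀ s, x s = 0 := fun s => le_antisymm (h s) (hxnn s)
    rw [Finset.sum_congr rfl fun s _ => this s] at hxsum
    simp at hxsum
  set B := ∑ n ∈ F, matPow A n with hB
  -- real eigen equation for B
  set φ : (Fin k → ℕ) → ℝ := fun n => ((List.finRange k).map fun i => lam i ^ n i).prod with hφ
  have hmat : ∀ n, (matPow A n).mulVec x = φ n • x := fun n =>
    listprod_mulVec A lam x hlam n (List.finRange k)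
  set μ : ℝ := ∑ n ∈ F, φ n with hμ
  have hBx : B.mulVec x = μ • x := by
    rw [hB, sum_mulVec']
    rw [Finset.sum_congr rfl fun n _ => hmat n, ← Finset.sum_smul]
  -- B x is strictly positive
  have hBxpos : ∀ s, 0 < (B.mulVec x) s := by
    intro s
    simp only [Matrix.mulVec, dotProduct]
    exact Finset.sum_pos' (fun t _ => mul_nonneg (hF s t).le (hxnn t))
      ⟨s1, Finset.mem_univ s1, mul_pos (hF s s1) hs1⟩
  have hμpos : 0 < μ := by
    have h1 := hBxpos s1
    rw [hBx] at h1
    simp only [Pi.smul_apply, smul_eq_mul] at h1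
    nlinarith
  have hxpos : ∀ s, 0 < x s := by
    intro s
    have h1 := hBxpos s
    rw [hBx] at h1
    simp only [Pi.smul_apply, smul_eq_mul] at h1
    nlinarith
  -- each lam i equals the spectral radius
  have hspec : ∀ i, specRad (A i) = lam i := fun i =>
    specRad_eq (A i) (hnn i) x hxpos (lam i) (hlam i)
  have hz' : ∀ i, ((A i).map Complex.ofReal).mulVec z = ((lam i : ℝ) : ℂ) • z := by
    intro i; rw [← hspec i]; exact hz i
  -- complex eigen equation for B
  set ψ : Matrix S S ℝ →+* Matrix S S ℂ := Complex.ofRealHom.mapMatrix with hψ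
  have hψeq : ∀ M : Matrix S S ℝ, ψ M = M.map Complex.ofReal := fun M => rfl
  have hmatC : ∀ n, (ψ (matPow A n)).mulVec z = ((φ n : ℝ) : ℂ) • z := by
    intro n
    rw [matPow, map_list_prod, List.map_map]
    have h1 : (ψ ∘ fun i => A i ^ n i) = fun i => (ψ (A i)) ^ n i := by
      funext i; simp [map_pow]
    rw [h1, listprod_mulVec (fun i => ψ (A i)) (fun i => ((lam i : ℝ) : ℂ)) z
      (fun i => hz' i) n (List.finRange k)]
    congr 1
    rw [hφ, ofReal_list_prod, List.map_map]
    refine congrArg List.prod (List.map_congr_left fun i _ => ?_)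
    simp [Function.comp]
  have hBz : (B.map Complex.ofReal).mulVec z = ((μ : ℝ) : ℂ) • z := by
    rw [← hψeq, hB, map_sum, sum_mulVec',
      Finset.sum_congr rfl fun n _ => hmatC n, ← Finset.sum_smul]
    norm_cast
  by_cases hz0 : z = 0
  · exact ⟨0, by simp [hz0]⟩
  haveI := hSne
  obtain ⟨s0, -, hs0⟩ := Finset.exists_max_image Finset.univ (fun s => ‖z s‖ / x s)
    Finset.univ_nonempty
  set c : ℝ := ‖z s0‖ / x s0 with hc
  have hle : ∀ t, ‖z t‖ ≤ c * x t := by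
    intro t
    have h := hs0 t (Finset.mem_univ t)
    calc ‖z t‖ = ‖z t‖ / x t * x t := by rw [div_mul_cancel₀ _ (hxpos t).ne']
    _ ≤ c * x t := mul_le_mul_of_nonneg_right h (hxpos t).le
  have hcpos : 0 < c := by
    rcases Function.ne_iff.mp hz0 with ⟨s, hs⟩
    exact lt_of_lt_of_le (div_pos (norm_pos_iff.mpr hs) (hxpos s)) (hs0 s (Finset.mem_univ s))
  have hzs0 : ‖z s0‖ = c * x s0 := by rw [hc, div_mul_cancel₀ _ (hxpos s0).ne']
  have hrow : ∑ t, (B s0 t : ℂ) * z t = (μ : ℂ) * z s0 := by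
    have h := congrFun hBz s0
    simpa [Matrix.mulVec, dotProduct, Matrix.map_apply] using h
  have hTnorm : ‖∑ t, (B s0 t : ℂ) * z t‖ = μ * (c * x s0) := by
    rw [hrow, norm_mul, hzs0, Complex.norm_real, Real.norm_of_nonneg hμpos.le]
  have hBxs0 : ∑ t, B s0 t * x t = μ * x s0 := by
    have h := congrFun hBx s0
    simpa [Matrix.mulVec, dotProduct] using h
  have hsum2 : ∑ t, B s0 t * (c * x t) = μ * (c * x s0) := by
    calc ∑ t, B s0 t * (c * x t) = c * ∑ t, B s0 t * x t := by
          rw [Finset.mul_sum]; exact Finset.sum_congr rfl fun t _ => by ring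
    _ = μ * (c * x s0) := by rw [hBxs0]; ring
  have hnorms : ∀ t, ‖(B s0 t : ℂ) * z t‖ = B s0 t * ‖z t‖ := by
    intro t
    rw [norm_mul, Complex.norm_real, Real.norm_of_nonneg (hF s0 t).le]
  have hdown : ∑ t, B s0 t * (c * x t) ≤ ∑ t, B s0 t * ‖z t‖ := by
    rw [hsum2, ← hTnorm]
    refine le_trans (norm_sum_le _ _) ?_
    exact le_of_eq (Finset.sum_congr rfl fun t _ => hnorms t)
  have hup : ∀ t ∈ Finset.univ, B s0 t * ‖z t‖ ≤ B s0 t * (c * x t) :=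
    fun t _ => mul_le_mul_of_nonneg_left (hle t) (hF s0 t).le
  have heqsum : ∀ t, B s0 t * ‖z t‖ = B s0 t * (c * x t) := by
    have h := (Finset.sum_eq_sum_iff_of_le hup).mp
      (le_antisymm (Finset.sum_le_sum hup) hdown)
    exact fun t => h t (Finset.mem_univ t)
  have hzt : ∀ t, ‖z t‖ = c * x t := fun t =>
    mul_left_cancel₀ (hF s0 t).ne' (heqsum t)
  -- triangle inequality equality case
  set T : ℂ := ∑ t, (B s0 t : ℂ) * z t with hT
  have hT0 : T ≠ 0 := by
    intro h
    rw [h, norm_zero] at hTnorm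
    nlinarith [mul_pos hμpos (mul_pos hcpos (hxpos s0))]
  set u : ℂ := (starRingEnd ℂ) T / (‖T‖ : ℂ) with hu
  have hunorm : ‖u‖ = 1 := by
    rw [hu, norm_div, RCLike.norm_conj, Complex.norm_real, norm_norm,
      div_self (norm_ne_zero_iff.mpr hT0)]
  have hu0 : u ≠ 0 := by intro h; rw [h, norm_zero] at hunorm; norm_num at hunorm
  have hTne : (‖T‖ : ℂ) ≠ 0 := by exact_mod_cast norm_ne_zero_iff.mpr hT0
  have huT : u * T = (‖T‖ : ℂ) := by
    rw [hu, div_mul_eq_mul_div, mul_comm ((starRingEnd ℂ) T) T, Complex.mul_conj,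
      Complex.normSq_eq_norm_sq]
    push_cast
    rw [sq]
    field_simp
  have hsumre : ∑ t, (u * ((B s0 t : ℂ) * z t)).re = ∑ t, ‖(B s0 t : ℂ) * z t‖ := by
    have h1 : ∑ t, (u * ((B s0 t : ℂ) * z t)).re = (u * T).re := by
      rw [hT, Finset.mul_sum, Complex.re_sum]
    have h2 : ∑ t, ‖(B s0 t : ℂ) * z t‖ = ‖T‖ := by
      rw [Finset.sum_congr rfl fun t _ => hnorms t]
      rw [Finset.sum_congr rfl fun t _ => congrArg (fun r => B s0 t * r) (hzt t)]
      rw [hsum2, ← hTnorm]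
    rw [h1, h2, huT, Complex.ofReal_re]
  have hterm : ∀ t ∈ Finset.univ, (u * ((B s0 t : ℂ) * z t)).re ≤ ‖(B s0 t : ℂ) * z t‖ := by
    intro t _
    refine le_trans (Complex.re_le_norm _) ?_
    rw [norm_mul, hunorm, one_mul]
  have heqterm : ∀ t, (u * ((B s0 t : ℂ) * z t)).re = ‖(B s0 t : ℂ) * z t‖ := by
    have h := (Finset.sum_eq_sum_iff_of_le hterm).mp hsumre
    exact fun t => h t (Finset.mem_univ t)
  have hfinal : ∀ t, u * ((B s0 t : ℂ) * z t) = ((B s0 t * (c * x t) : ℝ) : ℂ) := by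
    intro t
    have h1 : ‖u * ((B s0 t : ℂ) * z t)‖ = ‖(B s0 t : ℂ) * z t‖ := by
      rw [norm_mul, hunorm, one_mul]
    have h2 : (u * ((B s0 t : ℂ) * z t)).re = ‖u * ((B s0 t : ℂ) * z t)‖ := by
      rw [h1]; exact heqterm t
    have h3 := re_eq_abs_imp h2
    rw [h3, heqterm t, hnorms t, hzt t]
  refine ⟨u⁻¹ * c, funext fun t => ?_⟩
  have hB' : (B s0 t : ℂ) ≠ 0 := by
    exact_mod_cast (hF s0 t).ne'
  have h := hfinal t
  have : z t = u⁻¹ * ((B s0 t : ℂ))⁻¹ * ((B s0 t * (c * x t) : ℝ) : ℂ) := by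
    field_simp at h ⊢
    linear_combination h
  rw [this]
  simp only [Pi.smul_apply, smul_eq_mul]
  push_cast
  field_simp

end PFAux
end

section
/- Let Λ be a strongly connected finite k-graph and let m, n, p, q ∈ ℕ^k. If σ^m(x) = σ^n(x) for all x ∈ Λ^∞ and p − q = m − n (as elements of ℤ^k), then σ^p(x) = σ^q(x) for all x ∈ Λ^∞. -/
/-- A higher-rank graph (`k`-graph): a countable category with a degree functor
`d : Λ → ℕ^k` satisfying the unique factorisation property.  Morphisms are called
paths; the vertices are the paths of degree `0` (the identity morphisms).
`r` and `s` are the codomain (range) and domain (source) maps.  By convention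
`Λ^{e_i} ≠ ∅` for each standard generator `e_i` of `ℕ^k`. -/
structure KGraph (k : ℕ) where
  Path : Type
  countable : Countable Path
  d : Path → Fin k → ℕ
  r : Path → Path
  s : Path → Path
  d_r : ∀ lam, d (r lam) = 0
  d_s : ∀ lam, d (s lam) = 0
  r_vertex : ∀ v, d v = 0 → r v = v
  s_vertex : ∀ v, d v = 0 → s v = v
  comp : ∀ μ ν : Path, s μ = r ν → Path
  r_comp : ∀ μ ν h, r (comp μ ν h) = r μ
  s_comp : ∀ μ ν h, s (comp μ ν h) = s ν
  d_comp : ∀ μ ν h, d (comp μ ν h) = d μ + d ν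
  id_comp : ∀ lam (h : s (r lam) = r lam), comp (r lam) lam h = lam
  comp_id : ∀ lam (h : s lam = r (s lam)), comp lam (s lam) h = lam
  assoc : ∀ μ ν τ (h1 : s μ = r ν) (h2 : s ν = r τ)
      (h3 : s (comp μ ν h1) = r τ) (h4 : s μ = r (comp ν τ h2)),
      comp (comp μ ν h1) τ h3 = comp μ (comp ν τ h2) h4
  factor : ∀ (lam : Path) (m n : Fin k → ℕ), d lam = m + n →
      ∃! μν : Path × Path, ∃ h : s μν.1 = r μν.2,
        d μν.1 = m ∧ d μν.2 = n ∧ comp μν.1 μν.2 h = lam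
  edge_nonempty : ∀ i : Fin k, ∃ lam, d lam = Pi.single i 1

namespace KGraph

variable {k : ℕ}

/-- The vertices of a `k`-graph: the paths of degree `0`. -/
abbrev Vertex (Λ : KGraph k) : Type := {v : Λ.Path // Λ.d v = 0}

/-- A `k`-graph is finite if `Λ^n` is finite for every `n ∈ ℕ^k`. -/
def IsFinite (Λ : KGraph k) : Prop := ∀ n : Fin k → ℕ, {lam : Λ.Path | Λ.d lam = n}.Finite

/-- A `k`-graph is strongly connected if `vΛw ≠ ∅` for all vertices `v, w`. -/
def StronglyConnected (Λ : KGraph k) : Prop :=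
  ∀ v w : Λ.Path, Λ.d v = 0 → Λ.d w = 0 → ∃ lam : Λ.Path, Λ.r lam = v ∧ Λ.s lam = w

/-- `Λ^min(μ,ν) = {(α,β) : μα = νβ, d(μα) = d(μ) ∨ d(ν)}`. -/
def minSet (Λ : KGraph k) (μ ν : Λ.Path) : Set (Λ.Path × Λ.Path) :=
  {p | ∃ (h1 : Λ.s μ = Λ.r p.1) (h2 : Λ.s ν = Λ.r p.2),
      Λ.comp μ p.1 h1 = Λ.comp ν p.2 h2 ∧ Λ.d μ + Λ.d p.1 = Λ.d μ ⊔ Λ.d ν}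

end KGraph

/-- An infinite path in a `k`-graph `Λ`: a degree-preserving functor `x : Ω_k → Λ`,
recorded by its values `x(m,n)` for `m ≤ n` in `ℕ^k`. -/
structure InfinitePath {k : ℕ} (Λ : KGraph k) where
  toFun : ∀ m n : Fin k → ℕ, m ≤ n → Λ.Path
  d_eq : ∀ m n h, Λ.d (toFun m n h) = n - m
  src : ∀ m n h, Λ.s (toFun m n h) = toFun n n le_rfl
  rng : ∀ m n h, Λ.r (toFun m n h) = toFun m m le_rfl
  comp_eq : ∀ m n p (h1 : m ≤ n) (h2 : n ≤ p)
      (hc : Λ.s (toFun m n h1) = Λ.r (toFun n p h2)),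
      Λ.comp (toFun m n h1) (toFun n p h2) hc = toFun m p (h1.trans h2)

namespace InfinitePath

variable {k : ℕ} {Λ : KGraph k}

/-- The shift map `σ^n` on the infinite-path space, `σ^n(x)(p,q) = x(n+p, n+q)`. -/
def shift (x : InfinitePath Λ) (n : Fin k → ℕ) : InfinitePath Λ where
  toFun p q h := x.toFun (n + p) (n + q) (add_le_add le_rfl h)
  d_eq p q h := by
    rw [x.d_eq]
    funext i
    exact Nat.add_sub_add_left (n i) (q i) (p i)
  src p q h := x.src _ _ _
  rng p q h := x.rng _ _ _
  comp_eq p q t h1 h2 hc := x.comp_eq _ _ _ _ _ hc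

/-- The range `r(x) = x(0,0)` of an infinite path. -/
def range (x : InfinitePath Λ) : Λ.Path := x.toFun 0 0 le_rfl

end InfinitePath

/-- `ExtEq Λ lam y x` says that `y = lam · x`, i.e. `y(0, d(lam)) = lam` and
`σ^{d(lam)}(y) = x`.  (Such an extension is unique when it exists.) -/
def KGraph.ExtEq {k : ℕ} (Λ : KGraph k) (lam : Λ.Path) (y x : InfinitePath Λ) : Prop :=
  y.toFun 0 (Λ.d lam) zero_le = lam ∧ y.shift (Λ.d lam) = x

/-- `Λ.IsTheta m n μ ν` says that `μ ∈ Λ^m`, `ν ∈ Λ^n`, and `μx = νx` for every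
infinite path `x ∈ Z(s(μ))`; i.e. `ν = θ_{m,n}(μ)`. -/
def KGraph.IsTheta {k : ℕ} (Λ : KGraph k) (m n : Fin k → ℕ) (μ ν : Λ.Path) : Prop :=
  Λ.d μ = m ∧ Λ.d ν = n ∧
    ∀ x : InfinitePath Λ, x.range = Λ.s μ →
      ∃ y : InfinitePath Λ, Λ.ExtEq μ y x ∧ Λ.ExtEq ν y x

/-- The periodicity group `Per Λ = {m − n : σ^m(x) = σ^n(x) for all x ∈ Λ^∞} ⊆ ℤ^k`. -/
def KGraph.Per {k : ℕ} (Λ : KGraph k) : Set (Fin k → ℤ) :=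
  {g | ∃ m n : Fin k → ℕ, (∀ i, (m i : ℤ) - n i = g i) ∧
      ∀ x : InfinitePath Λ, x.shift m = x.shift n}

/-- `Λ` is aperiodic if every vertex `v` admits `x ∈ Z(v)` with
`σ^m(x) ≠ σ^n(x)` for all `m ≠ n` in `ℕ^k`. -/
def KGraph.Aperiodic {k : ℕ} (Λ : KGraph k) : Prop :=
  ∀ v : Λ.Path, Λ.d v = 0 → ∃ x : InfinitePath Λ, x.range = v ∧
    ∀ m n : Fin k → ℕ, m ≠ n → x.shift m ≠ x.shift n

/-! ### Auxiliary machinery -/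

namespace KGraph

variable {k : ℕ} {Λ : KGraph k}

lemma comp_congr {μ μ' ν ν' : Λ.Path} (hμ : μ = μ') (hν : ν = ν')
    {h : Λ.s μ = Λ.r ν} {h' : Λ.s μ' = Λ.r ν'} :
    Λ.comp μ ν h = Λ.comp μ' ν' h' := by
  subst hμ; subst hν; rfl

lemma id_comp' (v z : Λ.Path) (hv : Λ.d v = 0) (h : Λ.s v = Λ.r z) :
    Λ.comp v z h = z := by
  have hv' : v = Λ.r z := (Λ.s_vertex v hv).symm.trans h
  subst hv'
  exact Λ.id_comp z h

/-- `SegAt L a b μ` : `μ` is the segment of `L` between positions `a` and `b`. -/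
def SegAt (Λ : KGraph k) (L : Λ.Path) (a b : Fin k → ℕ) (μ : Λ.Path) : Prop :=
  Λ.d μ = b - a ∧ ∃ (α β : Λ.Path) (h2 : Λ.s μ = Λ.r β)
    (h1 : Λ.s α = Λ.r (Λ.comp μ β h2)),
      Λ.d α = a ∧ Λ.comp α (Λ.comp μ β h2) h1 = L

lemma SegAt.unique {L : Λ.Path} {a b : Fin k → ℕ} {μ μ' : Λ.Path}
    (h : Λ.SegAt L a b μ) (h' : Λ.SegAt L a b μ') : μ = μ' := by
  obtain ⟨hd, α, β, h2, h1, hα, hL⟩ := h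
  obtain ⟨hd', α', β', h2', h1', hα', hL'⟩ := h'
  have hdL : Λ.d L = a + Λ.d (Λ.comp μ β h2) := by rw [← hL, Λ.d_comp, hα]
  have hdL' : Λ.d L = a + Λ.d (Λ.comp μ' β' h2') := by rw [← hL', Λ.d_comp, hα']
  have hu : Λ.d (Λ.comp μ' β' h2') = Λ.d (Λ.comp μ β h2) :=
    add_left_cancel (hdL'.symm.trans hdL)
  have e1 : (α, Λ.comp μ β h2) = (α', Λ.comp μ' β' h2') :=
    (Λ.factor L a (Λ.d (Λ.comp μ β h2)) hdL).unique ⟨h1, hα, rfl, hL⟩ ⟨h1', hα', hu, hL'⟩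
  have e2 : Λ.comp μ β h2 = Λ.comp μ' β' h2' := congrArg Prod.snd e1
  have hdβ : Λ.d β' = Λ.d β := by
    have h3 : Λ.d μ + Λ.d β = Λ.d μ' + Λ.d β' := by
      rw [← Λ.d_comp μ β h2, ← Λ.d_comp μ' β' h2', e2]
    rw [hd, hd'] at h3
    exact (add_left_cancel h3).symm
  have e3 : (μ, β) = (μ', β') :=
    (Λ.factor (Λ.comp μ β h2) (b - a) (Λ.d β) (by rw [Λ.d_comp, hd])).unique
      ⟨h2, hd, rfl, rfl⟩ ⟨h2', hd', hdβ, e2.symm⟩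
  exact congrArg Prod.fst e3

lemma SegAt.congr {L L' : Λ.Path} {a a' b b' : Fin k → ℕ} {μ : Λ.Path}
    (h : Λ.SegAt L a b μ) (hL : L = L') (ha : a = a') (hb : b = b') :
    Λ.SegAt L' a' b' μ := by
  subst hL; subst ha; subst hb; exact h

lemma segAt_triple (α μ β : Λ.Path) (h2 : Λ.s μ = Λ.r β)
    (h1 : Λ.s α = Λ.r (Λ.comp μ β h2)) :
    Λ.SegAt (Λ.comp α (Λ.comp μ β h2) h1) (Λ.d α) (Λ.d α + Λ.d μ) μ := by
  refine ⟨?_, α, β, h2, h1, rfl, rfl⟩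
  funext i
  simp only [Pi.sub_apply, Pi.add_apply]
  omega

lemma SegAt.extend {L : Λ.Path} {a b : Fin k → ℕ} {μ : Λ.Path}
    (h : Λ.SegAt L a b μ) (M : Λ.Path) (hc : Λ.s L = Λ.r M) :
    Λ.SegAt (Λ.comp L M hc) a b μ := by
  obtain ⟨hd, α, β, h2, h1, hα, hL⟩ := h
  subst hL
  have hβM : Λ.s β = Λ.r M := by rwa [Λ.s_comp, Λ.s_comp] at hc
  have h1r : Λ.s α = Λ.r μ := by rw [Λ.r_comp] at h1; exact h1
  have h2' : Λ.s μ = Λ.r (Λ.comp β M hβM) := by rw [Λ.r_comp]; exact h2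
  have h1' : Λ.s α = Λ.r (Λ.comp μ (Λ.comp β M hβM) h2') := by rw [Λ.r_comp]; exact h1r
  have hX : Λ.s (Λ.comp μ β h2) = Λ.r M := by rw [Λ.s_comp]; exact hβM
  have hY : Λ.s α = Λ.r (Λ.comp (Λ.comp μ β h2) M hX) := by rw [Λ.r_comp]; exact h1
  refine ⟨hd, α, Λ.comp β M hβM, h2', h1', hα, ?_⟩
  rw [Λ.assoc α (Λ.comp μ β h2) M h1 hX hc hY]
  exact comp_congr rfl (Λ.assoc μ β M h2 hβM hX h2').symm

lemma SegAt.prepend {M : Λ.Path} {a b : Fin k → ℕ} {μ : Λ.Path}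
    (h : Λ.SegAt M a b μ) (L : Λ.Path) (hc : Λ.s L = Λ.r M) :
    Λ.SegAt (Λ.comp L M hc) (Λ.d L + a) (Λ.d L + b) μ := by
  obtain ⟨hd, α, β, h2, h1, hα, hM⟩ := h
  subst hM
  have hLα : Λ.s L = Λ.r α := by rwa [Λ.r_comp] at hc
  have h1' : Λ.s (Λ.comp L α hLα) = Λ.r (Λ.comp μ β h2) := by rw [Λ.s_comp]; exact h1
  refine ⟨?_, Λ.comp L α hLα, β, h2, h1', ?_, ?_⟩
  · rw [hd]; funext i; simp only [Pi.sub_apply, Pi.add_apply]; omega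
  · rw [Λ.d_comp, hα]
  · exact Λ.assoc L α (Λ.comp μ β h2) hLα h1 h1' hc

lemma SegAt.range {L : Λ.Path} {a b : Fin k → ℕ} {μ : Λ.Path}
    (h : Λ.SegAt L a b μ) : Λ.SegAt L a a (Λ.r μ) := by
  obtain ⟨hd, α, β, h2, h1, hα, hL⟩ := h
  have hdr : Λ.d (Λ.r μ) = a - a := by
    rw [Λ.d_r]; funext i; simp only [Pi.sub_apply, Pi.zero_apply]; omega
  have h2' : Λ.s (Λ.r μ) = Λ.r (Λ.comp μ β h2) := by
    rw [Λ.s_vertex _ (Λ.d_r μ), Λ.r_comp]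
  have he : Λ.comp (Λ.r μ) (Λ.comp μ β h2) h2' = Λ.comp μ β h2 :=
    id_comp' _ _ (Λ.d_r μ) h2'
  have h1' : Λ.s α = Λ.r (Λ.comp (Λ.r μ) (Λ.comp μ β h2) h2') := by rw [he]; exact h1
  exact ⟨hdr, α, Λ.comp μ β h2, h2', h1', hα, (comp_congr rfl he).trans hL⟩

lemma SegAt.source {L : Λ.Path} {a b : Fin k → ℕ} {μ : Λ.Path}
    (h : Λ.SegAt L a b μ) (hab : a ≤ b) : Λ.SegAt L b b (Λ.s μ) := by
  obtain ⟨hd, α, β, h2, h1, hα, hL⟩ := h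
  have h1r : Λ.s α = Λ.r μ := by rw [Λ.r_comp] at h1; exact h1
  have h2' : Λ.s (Λ.s μ) = Λ.r β := by rw [Λ.s_vertex _ (Λ.d_s μ)]; exact h2
  have he : Λ.comp (Λ.s μ) β h2' = β := id_comp' _ _ (Λ.d_s μ) h2'
  have hαμ : Λ.d (Λ.comp α μ h1r) = b := by
    rw [Λ.d_comp, hα, hd]; funext i
    simp only [Pi.add_apply, Pi.sub_apply]
    have := Pi.le_def.mp hab i; omega
  have hds : Λ.d (Λ.s μ) = b - b := by
    rw [Λ.d_s]; funext i; simp only [Pi.sub_apply, Pi.zero_apply]; omega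
  have hg : Λ.s (Λ.comp α μ h1r) = Λ.r (Λ.comp (Λ.s μ) β h2') := by
    rw [Λ.s_comp, he]; exact h2
  have hg' : Λ.s (Λ.comp α μ h1r) = Λ.r β := by rw [Λ.s_comp]; exact h2
  refine ⟨hds, Λ.comp α μ h1r, β, h2', hg, hαμ, ?_⟩
  exact (comp_congr rfl he).trans ((Λ.assoc α μ β h1r h2 hg' h1).trans hL)

lemma segAt_exists (L : Λ.Path) (a b : Fin k → ℕ) (hab : a ≤ b) (hbd : b ≤ Λ.d L) :
    ∃ μ, Λ.SegAt L a b μ := by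
  have hsum : Λ.d L = a + (Λ.d L - a) := by
    funext i
    have h1 := Pi.le_def.mp hab i
    have h2 := Pi.le_def.mp hbd i
    simp only [Pi.add_apply, Pi.sub_apply]
    omega
  obtain ⟨⟨α, τ⟩, ⟨hc, hα, hτ, hL⟩, -⟩ := Λ.factor L a (Λ.d L - a) hsum
  have hsum2 : Λ.d τ = (b - a) + (Λ.d L - b) := by
    rw [hτ]; funext i
    have h1 := Pi.le_def.mp hab i
    have h2 := Pi.le_def.mp hbd i
    simp only [Pi.add_apply, Pi.sub_apply]
    omega
  obtain ⟨⟨μ, β⟩, ⟨hc2, hμ, hβ, hτ2⟩, -⟩ := Λ.factor τ (b - a) (Λ.d L - b) hsum2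
  have h1' : Λ.s α = Λ.r (Λ.comp μ β hc2) := by rw [hτ2]; exact hc
  exact ⟨μ, hμ, α, β, hc2, h1', hα, (comp_congr rfl hτ2).trans hL⟩

/-- The segment of `L` between positions `a` and `b`. -/
noncomputable def seg (L : Λ.Path) (a b : Fin k → ℕ) (hab : a ≤ b) (hbd : b ≤ Λ.d L) :
    Λ.Path :=
  (segAt_exists L a b hab hbd).choose

lemma seg_spec (L : Λ.Path) (a b : Fin k → ℕ) (hab : a ≤ b) (hbd : b ≤ Λ.d L) :
    Λ.SegAt L a b (seg L a b hab hbd) :=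
  (segAt_exists L a b hab hbd).choose_spec

lemma SegAt.comp {L : Λ.Path} {a b c : Fin k → ℕ} {μ₁ μ₂ : Λ.Path}
    (hA : Λ.SegAt L a b μ₁) (hB : Λ.SegAt L b c μ₂)
    (hab : a ≤ b) (hbc : b ≤ c) (hc : Λ.s μ₁ = Λ.r μ₂) :
    Λ.SegAt L a c (Λ.comp μ₁ μ₂ hc) := by
  obtain ⟨hd, α, β, h2, h1, hα, hL⟩ := hA
  obtain ⟨hd2, α2, β2, h22, h12, hα2, hL2⟩ := hB
  have hdL : Λ.d L = a + ((b - a) + Λ.d β) := by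
    rw [← hL, Λ.d_comp, Λ.d_comp, hα, hd]
  have hdL2 : Λ.d L = b + ((c - b) + Λ.d β2) := by
    rw [← hL2, Λ.d_comp, Λ.d_comp, hα2, hd2]
  have hβsum : Λ.d β = (c - b) + (Λ.d β - (c - b)) := by
    funext i
    have e1 := congrFun hdL i; have e2 := congrFun hdL2 i
    have h3 := Pi.le_def.mp hab i; have h4 := Pi.le_def.mp hbc i
    simp only [Pi.add_apply, Pi.sub_apply] at e1 e2 ⊢
    omega
  obtain ⟨⟨ν, β'⟩, ⟨hcν, hdν, hdβ', hνβ⟩, -⟩ := Λ.factor β (c - b) (Λ.d β - (c - b)) hβsum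
  subst hL
  have h1r : Λ.s α = Λ.r μ₁ := by rw [Λ.r_comp] at h1; exact h1
  have hrβν : Λ.r β = Λ.r ν := by rw [← hνβ, Λ.r_comp]
  have hμν : Λ.s μ₁ = Λ.r ν := h2.trans hrβν
  have h1x : Λ.s (Λ.comp α μ₁ h1r) = Λ.r (Λ.comp ν β' hcν) := by
    rw [Λ.s_comp, Λ.r_comp]; exact hμν
  -- `ν` is the segment of `L` between `b` and `c`
  have hν : Λ.SegAt (Λ.comp α (Λ.comp μ₁ β h2) h1) b c ν := by
    have base := segAt_triple (Λ.comp α μ₁ h1r) ν β' hcν h1x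
    refine base.congr ?_ ?_ ?_
    · have hg' : Λ.s (Λ.comp α μ₁ h1r) = Λ.r β := by rw [Λ.s_comp]; exact h2
      have step1 : Λ.comp (Λ.comp α μ₁ h1r) (Λ.comp ν β' hcν) h1x =
          Λ.comp (Λ.comp α μ₁ h1r) β hg' := comp_congr rfl hνβ
      exact step1.trans (Λ.assoc α μ₁ β h1r h2 hg' h1)
    · rw [Λ.d_comp, hα, hd]; funext i
      have := Pi.le_def.mp hab i
      simp only [Pi.add_apply, Pi.sub_apply]; omega
    · rw [Λ.d_comp, hα, hd, hdν]; funext i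
      have := Pi.le_def.mp hab i; have := Pi.le_def.mp hbc i
      simp only [Pi.add_apply, Pi.sub_apply]; omega
  have hμ2 : ν = μ₂ := hν.unique ⟨hd2, α2, β2, h22, h12, hα2, hL2⟩
  subst hμ2
  -- now exhibit the triple for `(a, c)`
  have h2y : Λ.s (Λ.comp μ₁ ν hμν) = Λ.r β' := by rw [Λ.s_comp]; exact hcν
  have h1y : Λ.s α = Λ.r (Λ.comp (Λ.comp μ₁ ν hμν) β' h2y) := by
    rw [Λ.r_comp, Λ.r_comp]; exact h1r
  have base2 := segAt_triple α (Λ.comp μ₁ ν hμν) β' h2y h1y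
  have hνβ'c : Λ.s μ₁ = Λ.r (Λ.comp ν β' hcν) := by rw [Λ.r_comp]; exact hμν
  refine (base2.congr ?_ ?_ ?_ : Λ.SegAt _ a c _)
  · have i1 : Λ.comp (Λ.comp μ₁ ν hμν) β' h2y = Λ.comp μ₁ (Λ.comp ν β' hcν) hνβ'c :=
      Λ.assoc μ₁ ν β' hμν hcν h2y hνβ'c
    have i2 : Λ.comp μ₁ (Λ.comp ν β' hcν) hνβ'c = Λ.comp μ₁ β h2 := comp_congr rfl hνβ
    exact comp_congr rfl (i1.trans i2)
  · exact hα
  · rw [hα, Λ.d_comp, hd, hdν]; funext i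
    have := Pi.le_def.mp hab i; have := Pi.le_def.mp hbc i
    simp only [Pi.add_apply, Pi.sub_apply]; omega

lemma exists_edge_into (hsc : Λ.StronglyConnected) (v : Λ.Path) (hv : Λ.d v = 0)
    (i : Fin k) : ∃ e, Λ.d e = Pi.single i 1 ∧ Λ.s e = v := by
  obtain ⟨f, hf⟩ := Λ.edge_nonempty i
  obtain ⟨μ, hrμ, hsμ⟩ := hsc (Λ.s f) v (Λ.d_s f) hv
  have hcf : Λ.s f = Λ.r μ := hrμ.symm
  have hd : Λ.d (Λ.comp f μ hcf) = Λ.d μ + Pi.single i 1 := by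
    rw [Λ.d_comp, hf, add_comm]
  obtain ⟨⟨μ', e⟩, ⟨hc', hd1, hd2, hcomp⟩, -⟩ := Λ.factor _ _ _ hd
  refine ⟨e, hd2, ?_⟩
  have : Λ.s (Λ.comp μ' e hc') = Λ.s (Λ.comp f μ hcf) := by rw [hcomp]
  rw [Λ.s_comp, Λ.s_comp] at this
  rw [this, hsμ]

lemma exists_path_into (hsc : Λ.StronglyConnected) (v : Λ.Path) (hv : Λ.d v = 0)
    (t : Fin k → ℕ) : ∃ lam, Λ.d lam = t ∧ Λ.s lam = v := by
  suffices H : ∀ (N : ℕ) (t : Fin k → ℕ), (∑ i, t i) = N →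
      ∃ lam, Λ.d lam = t ∧ Λ.s lam = v by exact H _ t rfl
  intro N
  induction N with
  | zero =>
    intro t ht
    have ht0 : t = 0 := by
      funext i
      exact Finset.sum_eq_zero_iff.mp ht i (Finset.mem_univ i)
    exact ⟨v, by rw [hv, ht0], Λ.s_vertex v hv⟩
  | succ N ih =>
    intro t ht
    have hex : ∃ i, t i ≠ 0 := by
      by_contra hcon
      push_neg at hcon
      simp only [Finset.sum_congr rfl fun i _ => hcon i, Finset.sum_const_zero] at ht
      omega
    obtain ⟨i, hi⟩ := hex
    set t' : Fin k → ℕ := t - Pi.single i 1 with ht'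
    have hsum : (∑ j, t' j) = N := by
      have h1 : (∑ j, t j) = (∑ j, t' j) + (∑ j, Pi.single i 1 j) := by
        rw [← Finset.sum_add_distrib]
        refine Finset.sum_congr rfl fun j _ => ?_
        rcases eq_or_ne j i with rfl | hji
        · simp [ht', Pi.sub_apply]
          omega
        · simp [ht', Pi.sub_apply, Pi.single_eq_of_ne hji]
      rw [Finset.sum_pi_single'] at h1
      simp only [Finset.mem_univ, if_true] at h1
      omega
    obtain ⟨lam', hd', hs'⟩ := ih t' hsum
    obtain ⟨e, hde, hse⟩ := exists_edge_into hsc (Λ.r lam') (Λ.d_r lam') i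
    have hce : Λ.s e = Λ.r lam' := hse
    refine ⟨Λ.comp e lam' hce, ?_, by rw [Λ.s_comp]; exact hs'⟩
    rw [Λ.d_comp, hde, hd']
    funext j
    rcases eq_or_ne j i with rfl | hji
    · simp [ht', Pi.sub_apply]
      omega
    · simp [ht', Pi.sub_apply, Pi.single_eq_of_ne hji]

end KGraph

namespace InfinitePath

variable {k : ℕ} {Λ : KGraph k}

lemma ext' {x y : InfinitePath Λ} (h : ∀ a b (hab : a ≤ b), x.toFun a b hab = y.toFun a b hab) :
    x = y := by
  obtain ⟨f, fd, fs, fr, fc⟩ := x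
  obtain ⟨g, gd, gs, gr, gc⟩ := y
  have hfg : f = g := by
    funext a b hab
    exact h a b hab
  subst hfg
  rfl

lemma toFun_congr (x : InfinitePath Λ) {a a' b b' : Fin k → ℕ}
    (ha : a = a') (hb : b = b') (h : a ≤ b) (h' : a' ≤ b') :
    x.toFun a b h = x.toFun a' b' h' := by
  subst ha; subst hb; rfl

lemma shift_shift (x : InfinitePath Λ) (a b : Fin k → ℕ) :
    (x.shift a).shift b = x.shift (a + b) := by
  refine ext' fun p q hpq => ?_
  exact toFun_congr x (add_assoc a b p).symm (add_assoc a b q).symm _ _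

@[simp] lemma d_range (x : InfinitePath Λ) : Λ.d x.range = 0 := by
  rw [range, x.d_eq]
  funext i; simp

lemma segAt_restrict (x : InfinitePath Λ) {a c b : Fin k → ℕ} (hac : a ≤ c) (hcb : c ≤ b) :
    Λ.SegAt (x.toFun 0 b zero_le) a c (x.toFun a c hac) := by
  have h2 : Λ.s (x.toFun a c hac) = Λ.r (x.toFun c b hcb) := by rw [x.src, x.rng]
  have e1 : Λ.comp (x.toFun a c hac) (x.toFun c b hcb) h2 = x.toFun a b (hac.trans hcb) :=
    x.comp_eq _ _ _ _ _ _
  have h1 : Λ.s (x.toFun 0 a zero_le) =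
      Λ.r (Λ.comp (x.toFun a c hac) (x.toFun c b hcb) h2) := by
    rw [Λ.r_comp, x.src, x.rng]
  have base := KGraph.segAt_triple (x.toFun 0 a zero_le) (x.toFun a c hac)
    (x.toFun c b hcb) h2 h1
  refine base.congr ?_ ?_ ?_
  · have hcab : Λ.s (x.toFun 0 a zero_le) = Λ.r (x.toFun a b (hac.trans hcb)) := by
      rw [x.src, x.rng]
    have step1 : Λ.comp (x.toFun 0 a zero_le)
        (Λ.comp (x.toFun a c hac) (x.toFun c b hcb) h2) h1 =
        Λ.comp (x.toFun 0 a zero_le) (x.toFun a b (hac.trans hcb)) hcab :=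
      KGraph.comp_congr rfl e1
    exact step1.trans (x.comp_eq _ _ _ _ _ _)
  · rw [x.d_eq]; funext i; simp
  · rw [x.d_eq, x.d_eq]; funext i
    have := Pi.le_def.mp hac i
    simp only [Pi.add_apply, Pi.sub_apply, Pi.zero_apply]
    omega

end InfinitePath

namespace InfinitePath

variable {k : ℕ} {Λ : KGraph k}

variable (x : InfinitePath Λ) (lam : Λ.Path) (hr : Λ.s lam = x.range)

/-- `lam` followed by `x(0,c)`. -/
def ext0 (c : Fin k → ℕ) : Λ.Path :=
  Λ.comp lam (x.toFun 0 c zero_le) (by rw [x.rng]; exact hr)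

lemma d_ext0 (c : Fin k → ℕ) : Λ.d (ext0 x lam hr c) = Λ.d lam + c := by
  rw [ext0, Λ.d_comp, x.d_eq]
  funext i; simp

lemma ext0_step {c c' : Fin k → ℕ} (hcc : c ≤ c') :
    ∃ hc : Λ.s (ext0 x lam hr c) = Λ.r (x.toFun c c' hcc),
      ext0 x lam hr c' = Λ.comp (ext0 x lam hr c) (x.toFun c c' hcc) hc := by
  have hc : Λ.s (ext0 x lam hr c) = Λ.r (x.toFun c c' hcc) := by
    rw [ext0, Λ.s_comp, x.src, x.rng]
  refine ⟨hc, ?_⟩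
  have h0c : Λ.s lam = Λ.r (x.toFun 0 c zero_le) := by rw [x.rng]; exact hr
  have hin : Λ.s (x.toFun 0 c zero_le) = Λ.r (x.toFun c c' hcc) := by
    rw [x.src, x.rng]
  have h0c' : Λ.s lam = Λ.r (Λ.comp (x.toFun 0 c zero_le) (x.toFun c c' hcc) hin) := by
    rw [Λ.r_comp]; exact h0c
  have e1 : ext0 x lam hr c' =
      Λ.comp lam (Λ.comp (x.toFun 0 c zero_le) (x.toFun c c' hcc) hin) h0c' :=
    KGraph.comp_congr rfl (x.comp_eq _ _ _ _ _ _).symm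
  rw [e1]
  exact (Λ.assoc lam (x.toFun 0 c zero_le) (x.toFun c c' hcc) h0c hin hc h0c').symm

lemma le_ext0_deg (b : Fin k → ℕ) : b ≤ Λ.d (ext0 x lam hr (b ⊔ Λ.d lam - Λ.d lam)) := by
  rw [d_ext0]
  intro i
  simp only [Pi.add_apply, Pi.sub_apply, Pi.sup_apply]
  omega

/-- The `(a,b)` segment of the extension of `x` by `lam`. -/
noncomputable def extFun (a b : Fin k → ℕ) (hab : a ≤ b) : Λ.Path :=
  KGraph.seg (ext0 x lam hr (b ⊔ Λ.d lam - Λ.d lam)) a b hab (le_ext0_deg x lam hr b)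

lemma extFun_segAt {a b : Fin k → ℕ} (hab : a ≤ b) (c : Fin k → ℕ)
    (hbc : b ≤ Λ.d lam + c) :
    Λ.SegAt (ext0 x lam hr c) a b (extFun x lam hr a b hab) := by
  have h0 := KGraph.seg_spec (ext0 x lam hr (b ⊔ Λ.d lam - Λ.d lam)) a b hab
    (le_ext0_deg x lam hr b)
  have hle : b ⊔ Λ.d lam - Λ.d lam ≤ c := by
    intro i
    have := Pi.le_def.mp hbc i
    simp only [Pi.sub_apply, Pi.sup_apply, Pi.add_apply] at this ⊢
    omega
  obtain ⟨hc, e⟩ := ext0_step x lam hr hle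
  exact (h0.extend _ hc).congr e.symm rfl rfl

lemma le_helper (b : Fin k → ℕ) : b ≤ Λ.d lam + (b ⊔ Λ.d lam - Λ.d lam) := by
  intro i
  simp only [Pi.add_apply, Pi.sub_apply, Pi.sup_apply]
  omega

/-- The extension of `x` by `lam`. -/
noncomputable def extend : InfinitePath Λ where
  toFun := extFun x lam hr
  d_eq a b h := (extFun_segAt x lam hr h _ (le_helper lam b)).1
  src a b h := by
    have h1 := (extFun_segAt x lam hr h _ (le_helper lam b)).source h
    have h2 := extFun_segAt x lam hr (le_refl b) (b ⊔ Λ.d lam - Λ.d lam)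
      (le_helper lam b)
    exact h1.unique h2
  rng a b h := by
    have h1 := (extFun_segAt x lam hr h _ (le_helper lam b)).range
    have h2 := extFun_segAt x lam hr (le_refl a) (b ⊔ Λ.d lam - Λ.d lam)
      (by exact le_trans h (le_helper lam b))
    exact h1.unique h2
  comp_eq a b c h1 h2 hc := by
    have hA := extFun_segAt x lam hr h1 (c ⊔ Λ.d lam - Λ.d lam)
      (le_trans h2 (le_helper lam c))
    have hB := extFun_segAt x lam hr h2 (c ⊔ Λ.d lam - Λ.d lam) (le_helper lam c)
    have hAB := hA.comp hB h1 h2 hc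
    have hC := extFun_segAt x lam hr (h1.trans h2) (c ⊔ Λ.d lam - Λ.d lam)
      (le_helper lam c)
    exact hAB.unique hC

lemma extend_shift : (extend x lam hr).shift (Λ.d lam) = x := by
  refine ext' fun a b hab => ?_
  have h1 : Λ.SegAt (ext0 x lam hr b) (Λ.d lam + a) (Λ.d lam + b)
      (extFun x lam hr (Λ.d lam + a) (Λ.d lam + b) (add_le_add le_rfl hab)) :=
    extFun_segAt x lam hr (add_le_add le_rfl hab) b le_rfl
  have h2 : Λ.SegAt (ext0 x lam hr b) (Λ.d lam + a) (Λ.d lam + b) (x.toFun a b hab) := by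
    have hres := segAt_restrict x hab (le_refl b)
    exact hres.prepend lam (by rw [x.rng]; exact hr)
  exact h1.unique h2

end InfinitePath

/-- If `σ^m(x) = σ^n(x)` for all infinite paths `x` and `p − q = m − n` in `ℤ^k`, then
`σ^p(x) = σ^q(x)` for all infinite paths `x`. -/
theorem periodicity_depends_on_difference {k : ℕ} (Λ : KGraph k)
    (hfin : Λ.IsFinite) (hsc : Λ.StronglyConnected)
    (m n p q : Fin k → ℕ)
    (h : ∀ x : InfinitePath Λ, x.shift m = x.shift n)
    (hpq : ∀ i, (p i : ℤ) - q i = (m i : ℤ) - n i) :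
    ∀ x : InfinitePath Λ, x.shift p = x.shift q := by
  intro x
  obtain ⟨lam, hdlam, hslam⟩ :=
    KGraph.exists_path_into hsc x.range (InfinitePath.d_range x) (m ⊔ n)
  set y := InfinitePath.extend x lam hslam with hy
  have hyx : y.shift (m ⊔ n) = x := by
    have hes := InfinitePath.extend_shift x lam hslam
    rw [hdlam] at hes
    exact hes
  set u : Fin k → ℕ := (m ⊔ n - m) + p with hu
  have e1 : u + m = (m ⊔ n) + p := by
    funext i
    simp only [hu, Pi.add_apply, Pi.sub_apply, Pi.sup_apply]
    omega
  have e2 : u + n = (m ⊔ n) + q := by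
    funext i
    have := hpq i
    simp only [hu, Pi.add_apply, Pi.sub_apply, Pi.sup_apply]
    omega
  calc x.shift p = (y.shift (m ⊔ n)).shift p := by rw [hyx]
    _ = y.shift ((m ⊔ n) + p) := InfinitePath.shift_shift y _ _
    _ = y.shift (u + m) := by rw [e1]
    _ = (y.shift u).shift m := (InfinitePath.shift_shift y u m).symm
    _ = (y.shift u).shift n := h _
    _ = y.shift (u + n) := InfinitePath.shift_shift y u n
    _ = y.shift ((m ⊔ n) + q) := by rw [e2]
    _ = (y.shift (m ⊔ n)).shift q := (InfinitePath.shift_shift y _ _).symm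
    _ = x.shift q := by rw [hyx]
end
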